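/- arXiv:2404.02182 — 4 statements merged into one kernel-verified Lean document; each statement's English description precedes it below -/
import Mathlib

section
/- If z : ℝ → ℝ is a positive function with z(β) → 0 and β·z(β) → 0 as β → ∞, then z(β)·∑_{j ≥ ⌈β⌉} e^{-j·z(β)} → 1 and z(β)²·∑_{j ≥ ⌈β⌉} (j+1)·e^{-j·z(β)} → 1 as β → +∞. -/
open Filter Real

lemma lem1 (t : ℝ) (ht : 0 < t) (N : ℕ) :
    ∑' j : ℕ, Real.exp (-((j + N : ℕ) : ℝ) * t)
      = Real.exp (-((N : ℝ) * t)) * (1 - Real.exp (-t))⁻¹ := by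
  have hr1 : Real.exp (-t) < 1 := by
    rw [Real.exp_lt_one_iff]; linarith
  have hr0 : (0:ℝ) ≤ Real.exp (-t) := (Real.exp_pos _).le
  have h : ∀ j : ℕ, Real.exp (-((j + N : ℕ) : ℝ) * t)
      = Real.exp (-t) ^ j * Real.exp (-((N : ℝ) * t)) := by
    intro j
    rw [← Real.exp_nat_mul, ← Real.exp_add]
    congr 1
    push_cast
    ring
  calc ∑' j : ℕ, Real.exp (-((j + N : ℕ) : ℝ) * t)
      = ∑' j : ℕ, Real.exp (-t) ^ j * Real.exp (-((N : ℝ) * t)) := tsum_congr h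
    _ = (1 - Real.exp (-t))⁻¹ * Real.exp (-((N : ℝ) * t)) := by
        rw [tsum_mul_right, tsum_geometric_of_lt_one hr0 hr1]
    _ = _ := mul_comm _ _

lemma lem2 (t : ℝ) (ht : 0 < t) (N : ℕ) :
    ∑' j : ℕ, (((j + N : ℕ) : ℝ) + 1) * Real.exp (-((j + N : ℕ) : ℝ) * t)
      = Real.exp (-((N : ℝ) * t)) *
        (Real.exp (-t) * ((1 - Real.exp (-t))⁻¹) ^ 2
          + ((N : ℝ) + 1) * (1 - Real.exp (-t))⁻¹) := by
  set r := Real.exp (-t) with hr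
  have hr1 : r < 1 := by rw [hr, Real.exp_lt_one_iff]; linarith
  have hr0 : (0:ℝ) ≤ r := (Real.exp_pos _).le
  have hrn : ‖r‖ < 1 := by rw [Real.norm_eq_abs, abs_of_nonneg hr0]; exact hr1
  have h1 : HasSum (fun j : ℕ => (j : ℝ) * r ^ j) (r / (1 - r) ^ 2) :=
    hasSum_coe_mul_geometric_of_norm_lt_one hrn
  have h2 : HasSum (fun j : ℕ => r ^ j) (1 - r)⁻¹ := hasSum_geometric_of_lt_one hr0 hr1
  have H := ((h1.add (h2.mul_left ((N : ℝ) + 1))).mul_right (r ^ N))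
  have hfun : (fun j : ℕ => (((j + N : ℕ) : ℝ) + 1) * Real.exp (-((j + N : ℕ) : ℝ) * t))
      = fun j : ℕ => ((j : ℝ) * r ^ j + ((N : ℝ) + 1) * r ^ j) * r ^ N := by
    funext j
    have he : Real.exp (-((j + N : ℕ) : ℝ) * t) = r ^ j * r ^ N := by
      rw [show (-((j + N : ℕ) : ℝ) * t) = ((j : ℕ) : ℝ) * (-t) + ((N : ℕ) : ℝ) * (-t) by
        push_cast; ring, Real.exp_add, Real.exp_nat_mul, Real.exp_nat_mul]
    rw [he]
    push_cast
    ring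
  rw [hfun, H.tsum_eq]
  have hN : r ^ N = Real.exp (-((N : ℝ) * t)) := by
    rw [hr, ← Real.exp_nat_mul]; congr 1; ring
  rw [hN, div_eq_mul_inv, ← inv_pow]
  ring

lemma tendsto_key : Tendsto (fun t : ℝ => t * (1 - Real.exp (-t))⁻¹) (nhdsWithin 0 {(0:ℝ)}ᶜ)
    (nhds 1) := by
  have hd : HasDerivAt (fun t : ℝ => 1 - Real.exp (-t)) 1 0 := by
    have h1 : HasDerivAt (fun t : ℝ => -t) (-1) 0 := (hasDerivAt_id (0:ℝ)).neg
    have h2 := h1.exp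
    have h3 := (hasDerivAt_const (0:ℝ) (1:ℝ)).sub h2
    simpa [Pi.sub_def] using h3
  have hs := hasDerivAt_iff_tendsto_slope.mp hd
  have hs' : Tendsto (fun t : ℝ => (1 - Real.exp (-t)) / t) (nhdsWithin 0 {(0:ℝ)}ᶜ) (nhds 1) := by
    refine hs.congr ?_
    intro t
    simp [slope_def_field]
  have hinv := hs'.inv₀ one_ne_zero
  rw [inv_one] at hinv
  refine hinv.congr ?_
  intro t
  rw [inv_div, div_eq_mul_inv]

theorem stmt8 (z : ℝ → ℝ) (hz : ∀ β, 0 < z β)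
    (hz0 : Tendsto z atTop (nhds 0))
    (hβz : Tendsto (fun β => β * z β) atTop (nhds 0)) :
    Tendsto (fun β : ℝ =>
        z β * ∑' j : ℕ, Real.exp (-((j + ⌈β⌉₊ : ℕ) : ℝ) * z β)) atTop (nhds 1) ∧
    Tendsto (fun β : ℝ =>
        (z β) ^ 2 * ∑' j : ℕ,
          (((j + ⌈β⌉₊ : ℕ) : ℝ) + 1) * Real.exp (-((j + ⌈β⌉₊ : ℕ) : ℝ) * z β))
      atTop (nhds 1) := by
  have hu : Tendsto (fun β => (⌈β⌉₊ : ℝ) * z β) atTop (nhds 0) := by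
    have hup : Tendsto (fun β : ℝ => β * z β + z β) atTop (nhds 0) := by
      simpa using hβz.add hz0
    refine tendsto_of_tendsto_of_tendsto_of_le_of_le' tendsto_const_nhds hup ?_ ?_
    · exact Eventually.of_forall fun β => mul_nonneg (Nat.cast_nonneg _) (hz β).le
    · filter_upwards [eventually_ge_atTop (0:ℝ)] with β hβ
      have h1 : (⌈β⌉₊ : ℝ) ≤ β + 1 := (Nat.ceil_lt_add_one hβ).le
      nlinarith [(hz β).le, mul_le_mul_of_nonneg_right h1 (hz β).le]
  have hzne : Tendsto z atTop (nhdsWithin 0 {(0:ℝ)}ᶜ) := by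
    rw [tendsto_nhdsWithin_iff]
    exact ⟨hz0, Eventually.of_forall fun β => (hz β).ne'⟩
  have hA : Tendsto (fun β => z β * (1 - Real.exp (-z β))⁻¹) atTop (nhds 1) :=
    tendsto_key.comp hzne
  have hE : Tendsto (fun β => Real.exp (-((⌈β⌉₊ : ℝ) * z β))) atTop (nhds 1) := by
    have := (Real.continuous_exp.tendsto 0).comp ((neg_zero : -(0:ℝ) = 0) ▸ hu.neg)
    simpa [Function.comp_def] using this
  have hEz : Tendsto (fun β => Real.exp (-(z β))) atTop (nhds 1) := by
    have := (Real.continuous_exp.tendsto 0).comp ((neg_zero : -(0:ℝ) = 0) ▸ hz0.neg)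
    simpa [Function.comp_def] using this
  constructor
  · have := hE.mul hA
    rw [one_mul] at this
    refine this.congr ?_
    intro β
    rw [lem1 (z β) (hz β) ⌈β⌉₊]
    ring
  · have hN1 : Tendsto (fun β => ((⌈β⌉₊ : ℝ) + 1) * z β) atTop (nhds 0) := by
      have := hu.add hz0
      rw [add_zero] at this
      refine this.congr ?_
      intro β; ring
    have hlim := hE.mul ((hEz.mul (hA.pow 2)).add (hN1.mul hA))
    have h1 : (1:ℝ) * (1 * 1 ^ 2 + 0 * 1) = 1 := by norm_num
    rw [h1] at hlim
    refine hlim.congr ?_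
    intro β
    rw [lem2 (z β) (hz β) ⌈β⌉₊]
    ring
end

section
/- Let X be a compact metric space, T : X → X continuous, and A : X → ℝ continuous. If μ_β is an equilibrium state for β·A + B_β (i.e., it maximizes ν ↦ h_ν(T) + ∫(β·A + B_β)dν over T-invariant probability measures ν), where B_β converges uniformly to a continuous function B, and μ_∞ is a weak* accumulation point of μ_β as β → +∞, then ∫ A dμ_∞ = max over T-invariant probabilities ν of ∫ A dν; that is, μ_∞ is an A-maximizing measure. -/
open Filter MeasureTheory

theorem stmt12 {X : Type*} [MetricSpace X] [CompactSpace X] [Nonempty X]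
    [MeasurableSpace X] [BorelSpace X]
    (T : X → X) (hT : Continuous T)
    (A B : X → ℝ) (hA : Continuous A) (hB : Continuous B)
    (Bfam : ℝ → X → ℝ) (hBfam : ∀ β, Continuous (Bfam β))
    (hconv : TendstoUniformly Bfam B atTop)
    (h : ProbabilityMeasure X → ℝ) (husc : UpperSemicontinuous h)
    (μ : ℝ → ProbabilityMeasure X)
    (hinv : ∀ β, (μ β).toMeasure.map T = (μ β).toMeasure)
    (heq : ∀ β : ℝ, ∀ ν : ProbabilityMeasure X,
      ν.toMeasure.map T = ν.toMeasure →
      h ν + ∫ x, (β * A x + Bfam β x) ∂ν.toMeasure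
        ≤ h (μ β) + ∫ x, (β * A x + Bfam β x) ∂(μ β).toMeasure)
    (μinf : ProbabilityMeasure X)
    (hacc : MapClusterPt μinf atTop μ) :
    μinf.toMeasure.map T = μinf.toMeasure ∧
    ∀ ν : ProbabilityMeasure X, ν.toMeasure.map T = ν.toMeasure →
      ∫ x, A x ∂ν.toMeasure ≤ ∫ x, A x ∂μinf.toMeasure := by
  -- Part 1: invariance of the cluster point
  set S : Set (ProbabilityMeasure X) :=
    {ν | ProbabilityMeasure.map ν hT.measurable.aemeasurable = ν} with hSdef
  have hSclosed : IsClosed S :=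
    isClosed_eq (ProbabilityMeasure.continuous_map hT) continuous_id
  have hmemS : ∀ ρ : ProbabilityMeasure X,
      ρ.toMeasure.map T = ρ.toMeasure → ρ ∈ S := by
    intro ρ hρ
    apply ProbabilityMeasure.toMeasure_injective
    rw [ProbabilityMeasure.toMeasure_map]
    exact hρ
  have hmemS' : ∀ ρ : ProbabilityMeasure X,
      ρ ∈ S → ρ.toMeasure.map T = ρ.toMeasure := by
    intro ρ hρ
    have := congrArg ProbabilityMeasure.toMeasure hρ
    rwa [ProbabilityMeasure.toMeasure_map] at this
  have hμinfS : μinf ∈ S := by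
    have hle : map μ atTop ≤ 𝓟 S := by
      rw [le_principal_iff, mem_map]
      exact Filter.Eventually.of_forall (fun β => hmemS (μ β) (hinv β))
    have : ClusterPt μinf (𝓟 S) := hacc.clusterPt.mono hle
    have : μinf ∈ closure S := mem_closure_iff_clusterPt.mpr this
    rwa [hSclosed.closure_eq] at this
  refine ⟨hmemS' μinf hμinfS, ?_⟩
  -- Part 2
  intro ν hν
  by_contra hlt
  push_neg at hlt
  set Iinf := ∫ x, A x ∂μinf.toMeasure with hIinf
  set Iν := ∫ x, A x ∂ν.toMeasure with hIν
  set ε := Iν - Iinf with hε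
  have hεpos : 0 < ε := by simp only [hε]; linarith
  -- continuity of the integral of A
  have contI : Continuous (fun ρ : ProbabilityMeasure X => ∫ x, A x ∂ρ.toMeasure) := by
    have := ProbabilityMeasure.continuous_integral_boundedContinuousFunction
      (X := X) (BoundedContinuousFunction.mkOfCompact ⟨A, hA⟩)
    simpa using this
  -- bound on B
  set fB := BoundedContinuousFunction.mkOfCompact ⟨B, hB⟩ with hfB
  set K := ‖fB‖ with hK
  have hBbound : ∀ x, |B x| ≤ K := by
    intro x
    have := fB.norm_coe_le_norm x
    rw [Real.norm_eq_abs] at this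
    exact this
  set C : ℝ := (h μinf + 1 - h ν) + 2 * (K + 1) with hC
  set β₀ : ℝ := max 1 (2 * (C + 1) / ε) with hβ₀
  -- frequently near μinf
  have hev1 : ∀ᶠ y in nhds μinf, h y < h μinf + 1 :=
    husc μinf (h μinf + 1) (lt_add_one _)
  have hev2 : ∀ᶠ y in nhds μinf,
      dist (∫ x, A x ∂y.toMeasure) Iinf < ε / 2 := by
    have : Filter.Tendsto (fun ρ : ProbabilityMeasure X => ∫ x, A x ∂ρ.toMeasure)
        (nhds μinf) (nhds Iinf) := contI.continuousAt
    exact Metric.tendsto_nhds.mp this (ε / 2) (by positivity)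
  have hfreq : ∃ᶠ β in atTop, μ β ∈
      {y : ProbabilityMeasure X | h y < h μinf + 1 ∧
        dist (∫ x, A x ∂y.toMeasure) Iinf < ε / 2} :=
    mapClusterPt_iff_frequently.mp hacc _ (hev1.and hev2)
  have hevQ : ∀ᶠ β in atTop, (∀ x, |Bfam β x| ≤ K + 1) ∧ β₀ ≤ β := by
    have h1 : ∀ᶠ β in atTop, ∀ x, dist (B x) (Bfam β x) < 1 :=
      Metric.tendstoUniformly_iff.mp hconv 1 one_pos
    have h1' : ∀ᶠ β in atTop, ∀ x, |Bfam β x| ≤ K + 1 := by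
      filter_upwards [h1] with β hβ x
      have := hβ x
      rw [Real.dist_eq] at this
      have := hBbound x
      have := abs_sub_abs_le_abs_sub (Bfam β x) (B x)
      rw [abs_sub_comm (Bfam β x) (B x)] at this
      linarith
    exact h1'.and (eventually_ge_atTop β₀)
  obtain ⟨β, ⟨hhμβ, hdistβ⟩, hBβ, hβ₀le⟩ := (hfreq.and_eventually hevQ).exists
  -- split the integrals
  have key := heq β ν hν
  have hintA : ∀ ρ : ProbabilityMeasure X, Integrable A ρ.toMeasure := fun ρ =>
    hA.integrable_of_hasCompactSupport (HasCompactSupport.of_compactSpace A)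
  have hintB : ∀ ρ : ProbabilityMeasure X, Integrable (Bfam β) ρ.toMeasure := fun ρ =>
    (hBfam β).integrable_of_hasCompactSupport (HasCompactSupport.of_compactSpace _)
  have hsplit : ∀ ρ : ProbabilityMeasure X,
      ∫ x, (β * A x + Bfam β x) ∂ρ.toMeasure
        = β * ∫ x, A x ∂ρ.toMeasure + ∫ x, Bfam β x ∂ρ.toMeasure := by
    intro ρ
    rw [integral_add ((hintA ρ).const_mul β) (hintB ρ), integral_const_mul]
  rw [hsplit ν, hsplit (μ β)] at key
  set Iβ := ∫ x, A x ∂(μ β).toMeasure with hIβ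
  set Jν := ∫ x, Bfam β x ∂ν.toMeasure with hJν
  set Jβ := ∫ x, Bfam β x ∂(μ β).toMeasure with hJβ
  -- bounds on Jν, Jβ
  have hJbound : ∀ ρ : ProbabilityMeasure X,
      |∫ x, Bfam β x ∂ρ.toMeasure| ≤ K + 1 := by
    intro ρ
    have hb : ∀ x, ‖Bfam β x‖ ≤ K + 1 := fun x => by
      simpa [Real.norm_eq_abs] using hBβ x
    have := norm_integral_le_of_norm_le_const (μ := ρ.toMeasure)
      (f := Bfam β) (C := K + 1) (Filter.Eventually.of_forall hb)
    have huniv : (ρ.toMeasure).real Set.univ = 1 := by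
      simp [measure_univ]
    rw [huniv, mul_one] at this
    simpa [Real.norm_eq_abs] using this
  have hJν' := hJbound ν
  have hJβ' := hJbound (μ β)
  rw [← hJν] at hJν'
  rw [← hJβ] at hJβ'
  -- distances
  rw [Real.dist_eq] at hdistβ
  have habs1 := abs_le.mp hJν'
  have habs2 := abs_le.mp hJβ'
  have habs3 := abs_lt.mp hdistβ
  -- β ≥ 1 and β * ε ≥ 2*(C+1)
  have hβ1 : (1 : ℝ) ≤ β := le_trans (le_max_left _ _) hβ₀le
  have hβ2 : 2 * (C + 1) / ε ≤ β := le_trans (le_max_right _ _) hβ₀le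
  have hβε : 2 * (C + 1) ≤ β * ε := by
    rw [div_le_iff₀ hεpos] at hβ2
    linarith
  -- the core inequality
  have hcore : β * (Iν - Iβ) ≤ C := by
    have : β * Iν - β * Iβ ≤ h (μ β) - h ν + Jβ - Jν := by linarith
    have hC' : h (μ β) - h ν + Jβ - Jν ≤ C := by
      simp only [hC]; linarith
    nlinarith [this, hC']
  have hIgap : ε / 2 < Iν - Iβ := by
    simp only [hε] at *
    linarith
  have hβpos : (0 : ℝ) < β := lt_of_lt_of_le one_pos hβ1
  nlinarith [mul_lt_mul_of_pos_left hIgap hβpos]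
end

section
/- Let X ⊆ {0,1,...,d}^ℕ be a subshift of finite type with shift σ, and A : X → ℝ Lipschitz, non-positive, with m(A) = 0 (sup of ∫A dν over invariant ν equals 0). Define the Mañé potential S(x,y) = lim_{ε→0} sup{ S_n(A)(z) : σⁿ(z) = y, d(x,z) < ε, n ≥ 1 } where S_n(A) = A + A∘σ + ... + A∘σ^{n-1}. Then for all x, y, z ∈ X, S(x,y) + S(y,z) ≤ S(x,z). -/
open Filter MeasureTheory Classical

/-- The left shift on one-sided sequences. -/
def shift {m : ℕ} (x : ℕ → Fin m) : ℕ → Fin m := fun n => x (n + 1)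

/-- The metric `d(x,y) = θ^{min{i : x_i ≠ y_i}}` on sequence space. -/
noncomputable def shiftDist (θ : ℝ) {m : ℕ} (x y : ℕ → Fin m) : ℝ :=
  if x = y then 0 else θ ^ sInf {i : ℕ | x i ≠ y i}

/-- The Birkhoff sum `S_n(A) = A + A∘σ + ... + A∘σ^{n-1}`. -/
noncomputable def birkhoff {m : ℕ} (A : (ℕ → Fin m) → ℝ) (n : ℕ) (x : ℕ → Fin m) : ℝ :=
  ∑ i ∈ Finset.range n, A (shift^[i] x)

/-- The Mañé potential
`S(x,y) = lim_{ε→0} sup {S_n(A)(z) : σⁿ(z) = y, d(x,z) < ε, n ≥ 1, z ∈ X}`,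
with values in the extended reals. -/
noncomputable def manePotential {m : ℕ} (θ : ℝ) (X : Set (ℕ → Fin m))
    (A : (ℕ → Fin m) → ℝ) (x y : ℕ → Fin m) : EReal :=
  ⨅ (ε : ℝ) (_ : 0 < ε),
    sSup {v : EReal | ∃ n : ℕ, 1 ≤ n ∧ ∃ z ∈ X,
      shift^[n] z = y ∧ shiftDist θ x z < ε ∧ v = (birkhoff A n z : EReal)}

/-- `X` is a subshift of finite type: the sequences avoiding a finite set of
forbidden words. -/
def IsSFT {m : ℕ} (X : Set (ℕ → Fin m)) : Prop :=
  ∃ F : Set (List (Fin m)), F.Finite ∧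
    X = {x | ∀ (i l : ℕ), List.ofFn (fun j : Fin l => x (i + j)) ∉ F}

/-- `m(A) = 0`: the supremum of `∫ A dν` over shift-invariant probability
measures giving full mass to `X` is zero. -/
def MaxIntegralZero {m : ℕ} (X : Set (ℕ → Fin m)) (A : (ℕ → Fin m) → ℝ) : Prop :=
  sSup {r : ℝ | ∃ ν : Measure (ℕ → Fin m), IsProbabilityMeasure ν ∧
    ν.map shift = ν ∧ ν X = 1 ∧ r = ∫ x, A x ∂ν} = 0

lemma shift_iterate {m : ℕ} (x : ℕ → Fin m) (n j : ℕ) : shift^[n] x j = x (j + n) := by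
  induction n generalizing x with
  | zero => rfl
  | succ n ih =>
    rw [Function.iterate_succ_apply, ih]
    simp [shift, Nat.add_assoc]

lemma shiftDist_nonneg {m : ℕ} {θ : ℝ} (hθ0 : 0 < θ) (x y : ℕ → Fin m) :
    0 ≤ shiftDist θ x y := by
  rw [shiftDist]; split_ifs
  · exact le_refl 0
  · exact (pow_pos hθ0 _).le

lemma agree_of_lt {m : ℕ} {θ : ℝ} (hθ0 : 0 < θ) (hθ1 : θ < 1) {x y : ℕ → Fin m} {k : ℕ}
    (h : shiftDist θ x y < θ ^ k) : ∀ i ≤ k, x i = y i := by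
  intro i hi
  by_cases hxy : x = y
  · rw [hxy]
  · rw [shiftDist, if_neg hxy] at h
    have hk : k < sInf {i : ℕ | x i ≠ y i} :=
      (pow_lt_pow_iff_right_of_lt_one₀ hθ0 hθ1).1 h
    have := Nat.notMem_of_lt_sInf (hi.trans_lt hk)
    simpa using this

lemma dist_le_of_agree {m : ℕ} {θ : ℝ} (hθ0 : 0 < θ) (hθ1 : θ < 1) {x y : ℕ → Fin m} {M : ℕ}
    (h : ∀ i ≤ M, x i = y i) : shiftDist θ x y ≤ θ ^ (M + 1) := by
  rw [shiftDist]
  split_ifs with hxy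
  · exact (pow_pos hθ0 _).le
  · apply pow_le_pow_of_le_one hθ0.le hθ1.le
    have hne : {i : ℕ | x i ≠ y i}.Nonempty := Function.ne_iff.1 hxy
    have hmem := Nat.sInf_mem hne
    by_contra hc
    push_neg at hc
    exact hmem (h _ (Nat.lt_succ_iff.1 hc))

lemma memX_iterate {m : ℕ} {X : Set (ℕ → Fin m)} (hXinv : ∀ x ∈ X, shift x ∈ X)
    {x : ℕ → Fin m} (hx : x ∈ X) (n : ℕ) : shift^[n] x ∈ X := by
  induction n with
  | zero => exact hx
  | succ n ih => rw [Function.iterate_succ_apply']; exact hXinv _ ih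

lemma birkhoff_nonpos {m : ℕ} {X : Set (ℕ → Fin m)} (hXinv : ∀ x ∈ X, shift x ∈ X)
    {A : (ℕ → Fin m) → ℝ} (hAneg : ∀ x ∈ X, A x ≤ 0) {x : ℕ → Fin m} (hx : x ∈ X) (n : ℕ) :
    birkhoff A n x ≤ 0 :=
  Finset.sum_nonpos fun i _ => hAneg _ (memX_iterate hXinv hx i)

lemma birkhoff_add {m : ℕ} (A : (ℕ → Fin m) → ℝ) (n k : ℕ) (x : ℕ → Fin m) :
    birkhoff A (n + k) x = birkhoff A n x + birkhoff A k (shift^[n] x) := by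
  unfold birkhoff
  rw [Finset.sum_range_add]
  congr 1
  refine Finset.sum_congr rfl fun i _ => ?_
  rw [← Function.iterate_add_apply, Nat.add_comm i n]

lemma EReal.le_of_forall_add' {a b : EReal} (hb : b ≠ ⊤) (h : ∀ δ : ℝ, 0 < δ → a ≤ b + δ) :
    a ≤ b := by
  induction b with
  | bot => simpa using h 1 one_pos
  | coe r =>
    induction a with
    | bot => exact bot_le
    | coe s =>
      norm_cast
      refine le_of_forall_pos_le_add fun δ hδ => ?_
      have := h δ hδ
      norm_cast at this
    | top =>
      exfalso
      have := h 1 one_pos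
      rw [← EReal.coe_add, top_le_iff] at this
      exact (EReal.coe_ne_top _) this
  | top => exact le_top

theorem stmt15 (d : ℕ) (θ : ℝ) (hθ0 : 0 < θ) (hθ1 : θ < 1)
    (X : Set (ℕ → Fin (d + 1))) (hXc : IsClosed X)
    (hXinv : ∀ x ∈ X, shift x ∈ X) (hSFT : IsSFT X)
    (A : (ℕ → Fin (d + 1)) → ℝ)
    (hALip : ∃ C : ℝ, ∀ x ∈ X, ∀ y ∈ X, |A x - A y| ≤ C * shiftDist θ x y)
    (hAneg : ∀ x ∈ X, A x ≤ 0)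
    (hmA : MaxIntegralZero X A) :
    ∀ x ∈ X, ∀ y ∈ X, ∀ z ∈ X,
      manePotential θ X A x y + manePotential θ X A y z ≤ manePotential θ X A x z := by
  clear hmA hXc
  obtain ⟨F, hFfin, hFX⟩ := hSFT
  obtain ⟨ℓ, hℓ⟩ : ∃ ℓ : ℕ, ∀ w ∈ F, w.length ≤ ℓ := by
    obtain ⟨b, hb⟩ := (hFfin.image List.length).bddAbove
    exact ⟨b, fun w hw => hb (Set.mem_image_of_mem _ hw)⟩
  obtain ⟨C₀, hC₀⟩ := hALip
  intro x hx y hy z hz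
  set C := max C₀ 0 with hCdef
  have hC0 : 0 ≤ C := le_max_right _ _
  have h1θ : 0 < 1 - θ := by linarith
  have hLip : ∀ a ∈ X, ∀ b ∈ X, |A a - A b| ≤ C * shiftDist θ a b := fun a ha b hb =>
    (hC₀ a ha b hb).trans (mul_le_mul_of_nonneg_right (le_max_left _ _) (shiftDist_nonneg hθ0 _ _))
  set T : (ℕ → Fin (d + 1)) → (ℕ → Fin (d + 1)) → ℝ → Set EReal := fun a b ε =>
    {v : EReal | ∃ n : ℕ, 1 ≤ n ∧ ∃ w ∈ X,
      shift^[n] w = b ∧ shiftDist θ a w < ε ∧ v = (birkhoff A n w : EReal)} with hT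
  have hmp : ∀ a b, manePotential θ X A a b = ⨅ (ε : ℝ) (_ : 0 < ε), sSup (T a b ε) :=
    fun a b => rfl
  have hTle : ∀ a b ε, sSup (T a b ε) ≤ 0 := by
    intro a b ε
    refine sSup_le fun v hv => ?_
    obtain ⟨n, hn, w, hw, -, -, rfl⟩ := hv
    exact_mod_cast birkhoff_nonpos hXinv hAneg hw n
  have key : ∀ ε : ℝ, 0 < ε → ∀ L : ℕ, ℓ ≤ L → θ ^ (L + 2) < ε →
      sSup (T x y ε) + sSup (T y z (θ ^ L)) ≤
        sSup (T x z ε) + ((C * θ ^ (L + 2) / (1 - θ) : ℝ) : EReal) := by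
    intro ε hε L hLℓ hLε
    refine EReal.add_le_of_forall_lt fun a ha b hb => ?_
    obtain ⟨e, he, hae⟩ := lt_sSup_iff.1 ha
    obtain ⟨f, hf, hbf⟩ := lt_sSup_iff.1 hb
    obtain ⟨n, hn1, w, hwX, hwy, hwd, rfl⟩ := he
    obtain ⟨k, hk1, u, huX, huz, hud, rfl⟩ := hf
    have hagree : ∀ i ≤ L, y i = u i := agree_of_lt hθ0 hθ1 hud
    set v : ℕ → Fin (d + 1) := fun i => if i < n then w i else u (i - n) with hvdef
    have hshift_v : shift^[n] v = u := by
      funext j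
      rw [shift_iterate]
      simp [hvdef]
    have hv_eq_w : ∀ j ≤ n + L, v j = w j := by
      intro j hj
      by_cases hjn : j < n
      · simp [hvdef, hjn]
      · push_neg at hjn
        have h1 : v j = u (j - n) := by simp [hvdef, Nat.not_lt.2 hjn]
        have h2 : u (j - n) = y (j - n) := (hagree _ (by omega)).symm
        have h3 : y (j - n) = w j := by
          rw [← hwy, shift_iterate]
          congr 1
          omega
        rw [h1, h2, h3]
    have hvX : v ∈ X := by
      have hw' : ∀ (i l : ℕ), List.ofFn (fun j : Fin l => w (i + j)) ∉ F := by
        rw [hFX] at hwX; exact hwX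
      have hu' : ∀ (i l : ℕ), List.ofFn (fun j : Fin l => u (i + j)) ∉ F := by
        rw [hFX] at huX; exact huX
      rw [hFX]
      intro i l hmem
      by_cases hin : n ≤ i
      · refine hu' (i - n) l ?_
        have hlist : List.ofFn (fun j : Fin l => u ((i - n) + j)) =
            List.ofFn (fun j : Fin l => v (i + j)) := by
          refine congrArg _ (funext fun j => ?_)
          have hge : ¬ (i + (j : ℕ) < n) := by omega
          simp only [hvdef, if_neg hge]
          congr 1
          omega
        rw [hlist]; exact hmem
      · push_neg at hin
        by_cases hl : l ≤ L + 2
        · refine hw' i l ?_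
          have hlist : List.ofFn (fun j : Fin l => w (i + j)) =
              List.ofFn (fun j : Fin l => v (i + j)) := by
            refine congrArg _ (funext fun j => ?_)
            exact (hv_eq_w (i + j) (by have := j.isLt; omega)).symm
          rw [hlist]; exact hmem
        · have := hℓ _ hmem
          rw [List.length_ofFn] at this
          omega
    have hdist : shiftDist θ x v < ε := by
      by_cases hall : ∀ i ≤ n + L, x i = w i
      · have hle : shiftDist θ x v ≤ θ ^ (n + L + 1) :=
          dist_le_of_agree hθ0 hθ1 (fun i hi => (hall i hi).trans (hv_eq_w i hi).symm)
        refine hle.trans_lt (lt_of_le_of_lt ?_ hLε)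
        exact pow_le_pow_of_le_one hθ0.le hθ1.le (by omega)
      · push_neg at hall
        obtain ⟨i0, hi0le, hi0ne⟩ := hall
        have hxw : x ≠ w := fun h => hi0ne (congrFun h i0)
        have hDne : {i : ℕ | x i ≠ w i}.Nonempty := ⟨i0, hi0ne⟩
        have hNmem : x (sInf {i : ℕ | x i ≠ w i}) ≠ w (sInf {i : ℕ | x i ≠ w i}) :=
          Nat.sInf_mem hDne
        have hNle : sInf {i : ℕ | x i ≠ w i} ≤ n + L :=
          le_trans (Nat.sInf_le hi0ne) hi0le
        have hxvN : x (sInf {i : ℕ | x i ≠ w i}) ≠ v (sInf {i : ℕ | x i ≠ w i}) := by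
          rw [hv_eq_w _ hNle]; exact hNmem
        have hxv : x ≠ v := fun h => hxvN (congrFun h _)
        have hInf_eq : sInf {i : ℕ | x i ≠ v i} = sInf {i : ℕ | x i ≠ w i} := by
          refine le_antisymm (Nat.sInf_le hxvN) ?_
          by_contra hc
          push_neg at hc
          have hmem' : x (sInf {i : ℕ | x i ≠ v i}) ≠ v (sInf {i : ℕ | x i ≠ v i}) :=
            Nat.sInf_mem (⟨_, hxvN⟩ : {i : ℕ | x i ≠ v i}.Nonempty)
          have hxwM : x (sInf {i : ℕ | x i ≠ v i}) = w (sInf {i : ℕ | x i ≠ v i}) := by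
            have := Nat.notMem_of_lt_sInf hc
            simpa using this
          exact hmem' (hxwM.trans (hv_eq_w _ (by omega)).symm)
        have hxwd : θ ^ sInf {i : ℕ | x i ≠ w i} < ε := by
          have := hwd
          rwa [shiftDist, if_neg hxw] at this
        rw [shiftDist, if_neg hxv, hInf_eq]
        exact hxwd
    have hgeom : ∑ i ∈ Finset.range n, θ ^ i ≤ 1 / (1 - θ) := by
      rw [geom_sum_eq hθ1.ne n]
      have heq : (θ ^ n - 1) / (θ - 1) = (1 - θ ^ n) / (1 - θ) := by
        rw [← neg_div_neg_eq, neg_sub, neg_sub]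
      rw [heq, div_le_div_iff₀ h1θ h1θ]
      nlinarith [pow_nonneg hθ0.le n]
    have hterm : ∀ i < n, |A (shift^[i] w) - A (shift^[i] v)| ≤ C * θ ^ (n + L - i + 1) := by
      intro i hi
      refine (hLip _ (memX_iterate hXinv hwX i) _ (memX_iterate hXinv hvX i)).trans
        (mul_le_mul_of_nonneg_left ?_ hC0)
      apply dist_le_of_agree hθ0 hθ1
      intro jj hjj
      rw [shift_iterate, shift_iterate]
      exact (hv_eq_w (jj + i) (by omega)).symm
    have hdiff : birkhoff A n w - birkhoff A n v ≤ C * θ ^ (L + 2) / (1 - θ) := by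
      have h1 : birkhoff A n w - birkhoff A n v =
          ∑ i ∈ Finset.range n, (A (shift^[i] w) - A (shift^[i] v)) := by
        rw [Finset.sum_sub_distrib]; rfl
      rw [h1]
      have h2 : ∑ i ∈ Finset.range n, (A (shift^[i] w) - A (shift^[i] v)) ≤
          ∑ i ∈ Finset.range n, C * θ ^ (n + L - i + 1) :=
        Finset.sum_le_sum fun i hi =>
          (le_abs_self _).trans (hterm i (Finset.mem_range.1 hi))
      refine h2.trans ?_
      rw [← Finset.mul_sum]
      have h4 : ∑ i ∈ Finset.range n, θ ^ (n + L - i + 1) =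
          ∑ i ∈ Finset.range n, θ ^ (L + 2 + i) := by
        rw [← Finset.sum_range_reflect (fun i => θ ^ (L + 2 + i)) n]
        refine Finset.sum_congr rfl fun i hi => ?_
        have hi' := Finset.mem_range.1 hi
        congr 1
        omega
      rw [h4]
      have h5 : ∑ i ∈ Finset.range n, θ ^ (L + 2 + i) =
          θ ^ (L + 2) * ∑ i ∈ Finset.range n, θ ^ i := by
        rw [Finset.mul_sum]
        exact Finset.sum_congr rfl fun i _ => by rw [← pow_add]
      rw [h5]
      calc C * (θ ^ (L + 2) * ∑ i ∈ Finset.range n, θ ^ i)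
          ≤ C * (θ ^ (L + 2) * (1 / (1 - θ))) :=
            mul_le_mul_of_nonneg_left
              (mul_le_mul_of_nonneg_left hgeom (pow_nonneg hθ0.le _)) hC0
        _ = C * θ ^ (L + 2) / (1 - θ) := by ring
    have hconcat : birkhoff A n w + birkhoff A k u ≤
        birkhoff A (n + k) v + C * θ ^ (L + 2) / (1 - θ) := by
      have hsplit : birkhoff A (n + k) v = birkhoff A n v + birkhoff A k u := by
        rw [birkhoff_add, hshift_v]
      rw [hsplit]
      linarith
    have hmemT : ((birkhoff A (n + k) v : ℝ) : EReal) ∈ T x z ε := by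
      refine ⟨n + k, by omega, v, hvX, ?_, hdist, rfl⟩
      rw [Nat.add_comm n k, Function.iterate_add_apply, hshift_v, huz]
    calc a + b
        ≤ ((birkhoff A n w : ℝ) : EReal) + ((birkhoff A k u : ℝ) : EReal) :=
          add_le_add hae.le hbf.le
      _ = (((birkhoff A n w + birkhoff A k u : ℝ)) : EReal) := by norm_cast
      _ ≤ (((birkhoff A (n + k) v + C * θ ^ (L + 2) / (1 - θ) : ℝ)) : EReal) := by
          exact_mod_cast hconcat
      _ = ((birkhoff A (n + k) v : ℝ) : EReal) + ((C * θ ^ (L + 2) / (1 - θ) : ℝ) : EReal) := by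
          norm_cast
      _ ≤ sSup (T x z ε) + ((C * θ ^ (L + 2) / (1 - θ) : ℝ) : EReal) :=
          add_le_add_left (le_sSup hmemT) _
  have step2 : ∀ ε : ℝ, 0 < ε →
      manePotential θ X A x y + manePotential θ X A y z ≤ sSup (T x z ε) := by
    intro ε hε
    refine EReal.le_of_forall_add' (ne_top_of_le_ne_top (by simp) (hTle x z ε)) ?_
    intro δ hδ
    obtain ⟨L1, hL1⟩ := exists_pow_lt_of_lt_one hε hθ1
    have hKpos : (0 : ℝ) < C / (1 - θ) + 1 := by positivity
    obtain ⟨L2, hL2⟩ := exists_pow_lt_of_lt_one (div_pos hδ hKpos) hθ1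
    set L := max ℓ (max L1 L2) with hLdef
    have hL_ℓ : ℓ ≤ L := le_max_left _ _
    have hpow1 : θ ^ (L + 2) < ε :=
      lt_of_le_of_lt (pow_le_pow_of_le_one hθ0.le hθ1.le (by omega)) hL1
    have hpow2 : C * θ ^ (L + 2) / (1 - θ) ≤ δ := by
      have h1 : θ ^ (L + 2) ≤ θ ^ L2 := pow_le_pow_of_le_one hθ0.le hθ1.le (by omega)
      have h2 : C * θ ^ (L + 2) / (1 - θ) = (C / (1 - θ)) * θ ^ (L + 2) := by ring
      rw [h2]
      calc (C / (1 - θ)) * θ ^ (L + 2)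
          ≤ (C / (1 - θ) + 1) * θ ^ (L + 2) := by nlinarith [pow_nonneg hθ0.le (L + 2)]
        _ ≤ (C / (1 - θ) + 1) * (δ / (C / (1 - θ) + 1)) :=
            mul_le_mul_of_nonneg_left (h1.trans hL2.le) (by linarith)
        _ = δ := by rw [mul_comm, div_mul_cancel₀ _ hKpos.ne']
    calc manePotential θ X A x y + manePotential θ X A y z
        ≤ sSup (T x y ε) + sSup (T y z (θ ^ L)) := by
          rw [hmp x y, hmp y z]
          exact add_le_add (iInf₂_le ε hε) (iInf₂_le _ (pow_pos hθ0 L))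
      _ ≤ sSup (T x z ε) + ((C * θ ^ (L + 2) / (1 - θ) : ℝ) : EReal) :=
          key ε hε L hL_ℓ hpow1
      _ ≤ sSup (T x z ε) + ((δ : ℝ) : EReal) := by
          exact add_le_add_right (by exact_mod_cast hpow2) _
  rw [hmp x z]
  exact le_iInf fun ε => le_iInf fun hε => step2 ε hε
end

section
/- Under the same setting (subshift of finite type X, A Lipschitz, non-positive, m(A)=0, Mañé potential S), if σ(x) = y, then S(x,y) = A(x). -/
open Filter MeasureTheory Classical

theorem stmt17 (d : ℕ) (θ : ℝ) (hθ0 : 0 < θ) (hθ1 : θ < 1)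
    (X : Set (ℕ → Fin (d + 1))) (hXc : IsClosed X)
    (hXinv : ∀ x ∈ X, shift x ∈ X) (hSFT : IsSFT X)
    (A : (ℕ → Fin (d + 1)) → ℝ)
    (hALip : ∃ C : ℝ, ∀ x ∈ X, ∀ y ∈ X, |A x - A y| ≤ C * shiftDist θ x y)
    (hAneg : ∀ x ∈ X, A x ≤ 0)
    (hmA : MaxIntegralZero X A)
    (x y : ℕ → Fin (d + 1)) (hx : x ∈ X) (hy : y ∈ X)
    (hσ : shift x = y) :
    manePotential θ X A x y = (A x : EReal) := by
  obtain ⟨C, hC⟩ := hALip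
  set C' := max C 0 with hC'def
  have hC'0 : 0 ≤ C' := le_max_right _ _
  have hdnn : ∀ a b : ℕ → Fin (d+1), 0 ≤ shiftDist θ a b := by
    intro a b
    unfold shiftDist
    split
    · exact le_refl 0
    · positivity
  have hC' : ∀ a ∈ X, ∀ b ∈ X, |A a - A b| ≤ C' * shiftDist θ a b := by
    intro a ha b hb
    exact (hC a ha b hb).trans (mul_le_mul_of_nonneg_right (le_max_left _ _) (hdnn a b))
  have hiter : ∀ z ∈ X, ∀ i, shift^[i] z ∈ X := by
    intro z hz i
    induction i with
    | zero => simpa using hz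
    | succ k ih => rw [Function.iterate_succ_apply']; exact hXinv _ ih
  have hbirk : ∀ z ∈ X, ∀ n : ℕ, 1 ≤ n → birkhoff A n z ≤ A z := by
    intro z hz n hn
    have h1 : ∑ i ∈ Finset.range 1, -A (shift^[i] z) ≤ ∑ i ∈ Finset.range n, -A (shift^[i] z) := by
      refine Finset.sum_le_sum_of_subset_of_nonneg (Finset.range_subset_range.mpr hn) ?_
      intro i _ _
      exact neg_nonneg.mpr (hAneg _ (hiter z hz i))
    simp only [Finset.sum_neg_distrib, neg_le_neg_iff, Finset.sum_range_one,
      Function.iterate_zero, id_eq] at h1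
    exact h1
  apply le_antisymm
  · refine le_of_forall_gt_imp_ge_of_dense ?_
    intro a ha
    obtain ⟨r, hr1, hr2⟩ := EReal.exists_between_coe_real ha
    set ε : ℝ := (r - A x) / (C' + 1) with hεdef
    have hrA : A x < r := by exact_mod_cast hr1
    have hε : 0 < ε := div_pos (by linarith) (by linarith)
    have key : A x + C' * ε ≤ r := by
      have h1 : C' * ε ≤ (C' + 1) * ε := by nlinarith
      have h2 : (C' + 1) * ε = r - A x := by
        rw [hεdef]; field_simp [show C' + 1 ≠ 0 by linarith]
      linarith
    refine le_trans (iInf₂_le ε hε) (le_trans (sSup_le ?_) hr2.le)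
    rintro v ⟨n, hn, z, hz, hzn, hdist, rfl⟩
    have hAz : A z ≤ A x + C' * shiftDist θ x z := by
      have := hC' x hx z hz
      have habs : A z - A x ≤ |A x - A z| := by
        rw [abs_sub_comm]; exact le_abs_self _
      linarith
    have : birkhoff A n z ≤ r := by
      have h3 : C' * shiftDist θ x z ≤ C' * ε := by
        exact mul_le_mul_of_nonneg_left hdist.le hC'0
      have := hbirk z hz n hn
      linarith
    exact_mod_cast EReal.coe_le_coe_iff.mpr this
  · refine le_iInf₂ fun ε hε => ?_
    refine le_sSup ?_
    refine ⟨1, le_refl 1, x, hx, ?_, ?_, ?_⟩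
    · simpa using hσ
    · simpa [shiftDist] using hε
    · norm_num [birkhoff]
end
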